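/- For every n ≥ 1 the polynomial Rₙ(x) ∈ ℤ[x] has degree exactly 2·3ⁿ − 1. -/

import Mathlib

open Polynomial

/-- The Sylvester matrix of two polynomials `p`, `q` (with respect to their
natural degrees): the first `q.natDegree` rows contain the coefficients of `p`
in descending order, the remaining `p.natDegree` rows those of `q`. -/
noncomputable def sylvester {R : Type*} [CommRing R] (p q : R[X]) :
    Matrix (Fin (p.natDegree + q.natDegree)) (Fin (p.natDegree + q.natDegree)) R :=
  Matrix.of fun i j =>
    if (i : ℕ) < q.natDegree then
      (if (i : ℕ) ≤ (j : ℕ) ∧ (j : ℕ) ≤ p.natDegree + (i : ℕ) then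
        p.coeff (p.natDegree + (i : ℕ) - (j : ℕ)) else 0)
    else
      (if (i : ℕ) - q.natDegree ≤ (j : ℕ) ∧ (j : ℕ) ≤ q.natDegree + ((i : ℕ) - q.natDegree) then
        q.coeff (q.natDegree + ((i : ℕ) - q.natDegree) - (j : ℕ)) else 0)

/-- The resultant of two polynomials, i.e. the determinant of their Sylvester matrix. -/
noncomputable def resultant {R : Type*} [CommRing R] (p q : R[X]) : R :=
  (_root_.sylvester p q).det

/-- `f(z,w) = w³ + (−z³+6z²−6z−1)w² + (z³−3z²+3z+1)w − z³`. -/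
def fpoly {R : Type*} [CommRing R] (z w : R) : R :=
  w ^ 3 + (-z ^ 3 + 6 * z ^ 2 - 6 * z - 1) * w ^ 2 + (z ^ 3 - 3 * z ^ 2 + 3 * z + 1) * w - z ^ 3

/-- The iterated resultant `R⁽ⁿ⁾(x, xₙ)`, for `n ≥ 1`, as an element of `ℤ[x][xₙ]`
(`x` is the inner variable, `xₙ` the outer one):
`R⁽¹⁾(x,x₁) = f(x,x₁)` and
`R⁽ⁿ⁾(x,xₙ) = Res_{x_{n−1}}(R⁽ⁿ⁻¹⁾(x,x_{n−1}), f(x_{n−1},xₙ))` for `n ≥ 2`;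
the resultant is taken with respect to the variable `x_{n−1}`.
(The value at `n = 0` is junk.) -/
noncomputable def Rbig : ℕ → Polynomial (Polynomial ℤ)
  | 0 => 1
  | 1 => fpoly (Polynomial.C (Polynomial.X : Polynomial ℤ)) Polynomial.X
  | (n + 2) =>
      _root_.resultant ((Rbig (n + 1)).map (Polynomial.C : Polynomial ℤ →+* Polynomial (Polynomial ℤ)))
        (fpoly Polynomial.X (Polynomial.C (Polynomial.X : Polynomial (Polynomial ℤ))))

/-- `Rₙ(x) = R⁽ⁿ⁾(x, x) ∈ ℤ[x]`. -/
noncomputable def Rn (n : ℕ) : Polynomial ℤ := (Rbig n).eval Polynomial.X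


namespace Aux6

variable {A : Type*} [CommRing A]

lemma coeff_prod_of_le {ι : Type*} (s : Finset ι) (f : ι → A[X]) (w : ι → ℕ)
    (h : ∀ i ∈ s, (f i).natDegree ≤ w i) :
    (∏ i ∈ s, f i).coeff (∑ i ∈ s, w i) = ∏ i ∈ s, (f i).coeff (w i) := by
  classical
  induction s using Finset.induction_on with
  | empty => simp
  | insert a s hx ih =>
    rw [Finset.prod_insert hx, Finset.sum_insert hx, Finset.prod_insert hx,
      coeff_mul_add_eq_of_natDegree_le (h a (Finset.mem_insert_self a s))
        (natDegree_prod_le s f |>.trans (Finset.sum_le_sum fun i hi => h i (Finset.mem_insert_of_mem hi))),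
      ih fun i hi => h i (Finset.mem_insert_of_mem hi)]

lemma det_natDegree_le {N : ℕ} (M : Matrix (Fin N) (Fin N) A[X]) (w : Fin N → ℕ)
    (h : ∀ i j, (M i j).natDegree ≤ w i) :
    M.det.natDegree ≤ ∑ i, w i := by
  rw [Matrix.det_apply']
  refine natDegree_sum_le_of_forall_le _ _ fun σ _ => ?_
  refine (natDegree_mul_le).trans ?_
  have h1 : (Equiv.Perm.sign σ : A[X]).natDegree = 0 := natDegree_intCast _
  have h2 : (∏ i, M (σ i) i).natDegree ≤ ∑ i, w i := by
    refine (natDegree_prod_le _ _).trans ?_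
    calc ∑ i, (M (σ i) i).natDegree ≤ ∑ i, w (σ i) :=
          Finset.sum_le_sum fun i _ => h (σ i) i
      _ = ∑ i, w i := Equiv.sum_comp σ w
  omega

lemma det_coeff {N : ℕ} (M : Matrix (Fin N) (Fin N) A[X]) (w : Fin N → ℕ)
    (h : ∀ i j, (M i j).natDegree ≤ w i) :
    M.det.coeff (∑ i, w i) = (Matrix.of fun i j => (M i j).coeff (w i)).det := by
  rw [Matrix.det_apply', Matrix.det_apply', finset_sum_coeff]
  refine Finset.sum_congr rfl fun σ _ => ?_
  have hs : ∑ i, w i = ∑ i, w (σ i) := (Equiv.sum_comp σ w).symm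
  rw [coeff_intCast_mul, hs, coeff_prod_of_le _ _ _ (fun i _ => h (σ i) i)]
  simp [Matrix.of_apply]


/-- the coefficients of `f(t,y)` as a polynomial in `t`, as polynomials in `y`. -/
noncomputable def Q (A : Type*) [CommRing A] : ℕ → A[X]
  | 0 => X ^ 3 - X ^ 2 + X
  | 1 => -6 * X ^ 2 + 3 * X
  | 2 => 6 * X ^ 2 - 3 * X
  | 3 => -X ^ 2 + X - 1
  | _ => 0

lemma natDegree_Q_le (t : ℕ) : (Q A t).natDegree ≤ 3 := by
  rcases t with _|_|_|_|n
  · show ((X:A[X]) ^ 3 - X ^ 2 + X).natDegree ≤ 3; compute_degree!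
  · show ((-6 * X ^ 2 + 3 * X : A[X])).natDegree ≤ 3; compute_degree!
  · show ((6 * X ^ 2 - 3 * X : A[X])).natDegree ≤ 3; compute_degree!
  · show ((-X ^ 2 + X - 1 : A[X])).natDegree ≤ 3; compute_degree!
  · show ((0 : A[X])).natDegree ≤ 3; simp

lemma coeff_Q_three (t : ℕ) : (Q A t).coeff 3 = if t = 0 then 1 else 0 := by
  rcases t with _|_|_|_|n
  · show ((X:A[X]) ^ 3 - X ^ 2 + X).coeff 3 = _; simp [coeff_X]
  · show ((-6 * X ^ 2 + 3 * X : A[X])).coeff 3 = _; simp [coeff_X]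
  · show ((6 * X ^ 2 - 3 * X : A[X])).coeff 3 = _; simp [coeff_X]
  · show ((-X ^ 2 + X - 1 : A[X])).coeff 3 = _; simp [coeff_one, coeff_X]
  · show ((0 : A[X])).coeff 3 = _; simp

/-- Sylvester-shaped matrix: 3 rows of (formal degree `M`) coefficients `α`,
`M` rows of the coefficients of `f(·,y)`. -/
noncomputable def Tf (M : ℕ) (α : ℕ → A) (iv jv : ℕ) : A[X] :=
  if iv < 3 then
    (if iv ≤ jv ∧ jv ≤ M + iv then C (α (M + iv - jv)) else 0)
  else
    (if iv - 3 ≤ jv ∧ jv ≤ 3 + (iv - 3) then Q A (3 + (iv - 3) - jv) else 0)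

noncomputable def T (M : ℕ) (α : ℕ → A) : Matrix (Fin (M + 3)) (Fin (M + 3)) A[X] :=
  Matrix.of fun i j => Tf M α (i : ℕ) (j : ℕ)

lemma sum_weights (M a b : ℕ) :
    ∑ i : Fin (M + 3), (if (i : ℕ) < 3 then a else b) = 3 * a + M * b := by
  rw [Fin.sum_univ_eq_sum_range (fun i => if i < 3 then a else b) (M + 3)]
  induction M with
  | zero => simp [Finset.sum_range_succ]; ring
  | succ m ih =>
    have : m + 1 + 3 = (m + 3) + 1 := by ring
    rw [this, Finset.sum_range_succ, ih, if_neg (by omega)]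
    ring

lemma natDegree_T_entry (M : ℕ) (α : ℕ → A) (i j : Fin (M + 3)) :
    ((T M α) i j).natDegree ≤ if (i : ℕ) < 3 then 0 else 3 := by
  unfold T
  by_cases h : (i : ℕ) < 3 <;> simp only [Matrix.of_apply, Tf, h, if_true, if_false, reduceIte]
  · split <;> simp
  · split
    · exact natDegree_Q_le _
    · simp

lemma det_T_natDegree_le (M : ℕ) (α : ℕ → A) : (T M α).det.natDegree ≤ 3 * M := by
  have := det_natDegree_le (T M α) (fun i => if (i : ℕ) < 3 then 0 else 3)
    (fun i j => natDegree_T_entry M α i j)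
  rw [sum_weights M 0 3, Nat.mul_zero, Nat.zero_add] at this
  omega

lemma det_T_coeff (M : ℕ) (α : ℕ → A) (hM : 2 ≤ M) :
    (T M α).det.coeff (3 * M) = α M ^ 3 := by
  have h := det_coeff (T M α) (fun i => if (i : ℕ) < 3 then 0 else 3)
    (fun i j => natDegree_T_entry M α i j)
  rw [sum_weights M 0 3, Nat.mul_zero, Nat.zero_add, Nat.mul_comm] at h
  rw [h]
  set Nc : Matrix (Fin (M + 3)) (Fin (M + 3)) A :=
    Matrix.of fun i j => ((T M α) i j).coeff ((fun i : Fin (M+3) => if (i:ℕ) < 3 then 0 else 3) i)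
    with hNc
  let e : Fin 3 ⊕ Fin M ≃ Fin (M + 3) := finSumFinEquiv.trans (finCongr (by omega))
  have he1 : ∀ a : Fin 3, ((e (Sum.inl a) : Fin (M+3)) : ℕ) = (a : ℕ) := fun a => rfl
  have he2 : ∀ b : Fin M, ((e (Sum.inr b) : Fin (M+3)) : ℕ) = 3 + (b : ℕ) := fun b => rfl
  let U : Matrix (Fin 3) (Fin 3) A :=
    Matrix.of fun a a' => if (a : ℕ) ≤ (a' : ℕ) then α (M + a - a') else 0
  let Bm : Matrix (Fin 3) (Fin M) A := Matrix.of fun a b => Nc (e (Sum.inl a)) (e (Sum.inr b))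
  have key : Nc.submatrix e e = Matrix.fromBlocks U Bm 0 1 := by
    ext i j
    rcases i with a | b <;> rcases j with a' | b' <;>
      simp only [Matrix.submatrix_apply, Matrix.fromBlocks_apply₁₁, Matrix.fromBlocks_apply₁₂,
        Matrix.fromBlocks_apply₂₁, Matrix.fromBlocks_apply₂₂, hNc, Matrix.of_apply, T, Tf,
        he1, he2, U, Bm]
    · -- p-row, left block
      have ha : (a : ℕ) < 3 := a.isLt
      have ha' : (a' : ℕ) ≤ M + a := by have := a'.isLt; omega
      rw [if_pos ha]
      by_cases hle : (a : ℕ) ≤ (a' : ℕ)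
      · rw [if_pos ⟨hle, ha'⟩, if_pos hle, coeff_C]; simp
      · rw [if_neg (by tauto), if_neg hle]; simp
    · -- q-row, left block
      have hb : ¬ (3 + (b : ℕ) < 3) := by omega
      rw [if_neg hb, if_neg hb]
      have ha' : (a' : ℕ) < 3 := a'.isLt
      by_cases hc : 3 + (b : ℕ) - 3 ≤ (a' : ℕ) ∧ (a' : ℕ) ≤ 3 + (3 + (b : ℕ) - 3)
      · rw [if_pos hc, coeff_Q_three, if_neg (by omega)]; rfl
      · rw [if_neg hc]; simp
    · -- q-rows, right block: identity
      have hb : ¬ (3 + (b : ℕ) < 3) := by omega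
      rw [if_neg hb, if_neg hb]
      by_cases hc : 3 + (b : ℕ) - 3 ≤ 3 + (b' : ℕ) ∧ 3 + (b' : ℕ) ≤ 3 + (3 + (b : ℕ) - 3)
      · rw [if_pos hc, coeff_Q_three, Matrix.one_apply]
        have h3 : 3 + (3 + (b:ℕ) - 3) - (3 + (b':ℕ)) = (b:ℕ) - (b':ℕ) := by omega
        rw [h3]
        by_cases hbb : b = b'
        · subst hbb; rw [if_pos (by omega), if_pos rfl]
        · rw [if_neg (fun hz => hbb (Fin.ext (by omega))), if_neg hbb]
      · rw [if_neg hc, Matrix.one_apply,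
          if_neg (fun hh => hc (by subst hh; exact ⟨by omega, by omega⟩))]
        simp
  have : Nc.det = (Nc.submatrix e e).det := (Matrix.det_submatrix_equiv_self e Nc).symm
  rw [this, key, Matrix.det_fromBlocks_zero₂₁, Matrix.det_one, mul_one]
  rw [Matrix.det_fin_three]
  simp only [U, Matrix.of_apply]
  norm_num [Fin.val_zero, Fin.val_one]
  ring


lemma succAbove_three_val (M : ℕ) (h3 : (3:ℕ) < M + 1 + 3) (i : Fin (M + 3)) :
    ((Fin.succAbove ⟨3, h3⟩ i : Fin (M + 1 + 3)) : ℕ) =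
      if (i : ℕ) < 3 then (i : ℕ) else (i : ℕ) + 1 := by
  simp only [Fin.succAbove, Fin.lt_def, Fin.coe_castSucc]
  rw [apply_ite (Fin.val)]
  simp [Fin.coe_castSucc, Fin.val_succ]

lemma Tf_succ (M : ℕ) (α : ℕ → A) (h0 : α (M + 1) = 0) (iv jv : ℕ) :
    Tf (M + 1) α (if iv < 3 then iv else iv + 1) (jv + 1) = Tf M α iv jv := by
  unfold Tf
  by_cases hh : iv < 3
  · simp only [if_pos hh]
    by_cases hij : iv ≤ jv
    · rw [show M + 1 + iv - (jv + 1) = M + iv - jv from by omega,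
        if_congr (show (iv ≤ jv + 1 ∧ jv + 1 ≤ M + 1 + iv) ↔ (iv ≤ jv ∧ jv ≤ M + iv) from by omega)
          rfl rfl]
    · by_cases hij1 : iv ≤ jv + 1
      · rw [if_pos ⟨hij1, by omega⟩, show M + 1 + iv - (jv + 1) = M + 1 from by omega, h0,
          map_zero, if_neg (by omega)]
      · rw [if_neg (by omega), if_neg (by omega)]
  · simp only [if_neg (show ¬ (iv + 1 < 3) from by omega), if_neg hh]
    by_cases hc : iv - 3 ≤ jv ∧ jv ≤ 3 + (iv - 3)
    · rw [if_pos (by omega), if_pos hc,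
        show 3 + (iv + 1 - 3) - (jv + 1) = 3 + (iv - 3) - jv from by omega]
    · rw [if_neg (by omega), if_neg hc]

lemma det_T_succ (M : ℕ) (α : ℕ → A) (h0 : α (M + 1) = 0) :
    (T (M + 1) α).det = -(Q A 3) * (T M α).det := by
  have h3 : (3:ℕ) < M + 1 + 3 := by omega
  rw [Matrix.det_succ_column_zero]
  rw [Finset.sum_eq_single (⟨3, h3⟩ : Fin (M + 1 + 3))]
  · have hent : T (M + 1) α ⟨3, h3⟩ 0 = Q A 3 := by
      show Tf (M + 1) α 3 ((0 : Fin (M + 1 + 3)) : ℕ) = Q A 3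
      unfold Tf
      norm_num
    have hsub : (T (M + 1) α).submatrix (Fin.succAbove ⟨3, h3⟩) Fin.succ = T M α := by
      funext i j
      show Tf (M + 1) α ((Fin.succAbove ⟨3, h3⟩ i : Fin (M + 1 + 3)) : ℕ)
        ((Fin.succ j : Fin (M + 1 + 3)) : ℕ) = Tf M α (i : ℕ) (j : ℕ)
      rw [succAbove_three_val M h3 i, show ((Fin.succ j : Fin (M + 1 + 3)) : ℕ) = (j : ℕ) + 1
        from rfl]
      exact Tf_succ M α h0 _ _
    rw [hent, hsub]
    show (-1 : A[X]) ^ (3:ℕ) * _ * _ = _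
    ring
  · intro i _ hi
    have hzero : T (M + 1) α i 0 = 0 := by
      have hvi : (i : ℕ) ≠ 3 := by
        intro hc; exact hi (Fin.ext (by rw [hc]))
      show Tf (M + 1) α (i : ℕ) ((0 : Fin (M + 1 + 3)) : ℕ) = 0
      rw [show ((0 : Fin (M + 1 + 3)) : ℕ) = 0 from rfl]
      unfold Tf
      by_cases hh : (i : ℕ) < 3
      · rw [if_pos hh]
        rcases Nat.lt_or_ge 0 (i:ℕ) with h' | h'
        · rw [if_neg (by omega)]
        · have h0' : (i:ℕ) = 0 := by omega
          rw [if_pos (by omega), h0', Nat.add_zero, Nat.sub_zero, h0, map_zero]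
      · rw [if_neg hh, if_neg (by omega)]
    rw [hzero]
    ring
  · intro hmem; exact absurd (Finset.mem_univ _) hmem

/-! ### the swap homomorphism -/

noncomputable def psi : Polynomial (Polynomial ℤ) →+* Polynomial (Polynomial ℤ) :=
  eval₂RingHom (mapRingHom (C : ℤ →+* Polynomial ℤ)) (C X)

lemma psi_C (r : Polynomial ℤ) : psi (C r) = r.map (C : ℤ →+* Polynomial ℤ) := by
  simp [psi, coe_eval₂RingHom, eval₂_C, coe_mapRingHom]

lemma psi_X : psi X = C X := by
  simp [psi, coe_eval₂RingHom, eval₂_X]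

lemma psi_coeff_coeff (p : Polynomial (Polynomial ℤ)) (a b : ℕ) :
    ((psi p).coeff a).coeff b = (p.coeff b).coeff a := by
  induction p using Polynomial.induction_on' with
  | add p q hp hq => simp [map_add, coeff_add, hp, hq]
  | monomial n r =>
    rw [← C_mul_X_pow_eq_monomial, map_mul, map_pow, psi_C, psi_X, ← map_pow, coeff_mul_C,
      coeff_map, coeff_C_mul, coeff_X_pow, coeff_C_mul, coeff_X_pow]
    split_ifs <;> simp

/-! ### expansions of fpoly -/

lemma fpoly_expand_base {B : Type*} [CommRing B] (v : B) :
    fpoly (C v) (X : B[X]) =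
      C (-v^3) + C (v^3 - 3*v^2 + 3*v + 1) * X + C (-v^3 + 6*v^2 - 6*v - 1) * X^2 + X^3 := by
  unfold fpoly
  simp only [map_add, map_sub, map_mul, map_pow, map_neg, map_one, map_ofNat]
  ring

lemma fpoly_expand_q {B : Type*} [CommRing B] (v : B) :
    fpoly (X : B[X]) (C v) =
      C (v^3 - v^2 + v) + C (-6*v^2 + 3*v) * X + C (6*v^2 - 3*v) * X^2 + C (-v^2 + v - 1) * X^3 := by
  unfold fpoly
  simp only [map_add, map_sub, map_mul, map_pow, map_neg, map_one, map_ofNat]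
  ring

lemma q_coeff (t : ℕ) (ht : t ≤ 3) :
    (fpoly (X : (Polynomial (Polynomial ℤ))[X]) (C X)).coeff t = Q (Polynomial ℤ) t := by
  rw [fpoly_expand_q]
  interval_cases t <;>
    simp only [Q, coeff_add, coeff_C_mul, coeff_X_pow, coeff_C, coeff_X] <;> norm_num <;> ring

lemma q_natDegree : (fpoly (X : (Polynomial (Polynomial ℤ))[X]) (C X)).natDegree = 3 := by
  refine le_antisymm ?_ (le_natDegree_of_ne_zero ?_)
  · rw [fpoly_expand_q]; compute_degree
  · rw [q_coeff 3 le_rfl]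
    intro h
    have h2 := congrArg (fun p => coeff p 2) h
    simp only [Q, coeff_sub, coeff_add, coeff_neg, coeff_one, coeff_X, coeff_X_pow,
      coeff_zero] at h2
    norm_num at h2

lemma psi_Q (t : ℕ) : psi (Q (Polynomial ℤ) t) = C (Q ℤ t) := by
  rcases t with _|_|_|_|n <;>
    simp [Q, map_add, map_sub, map_mul, map_pow, map_neg, map_ofNat, psi_X]

/-! ### the invariant -/

def Inv (n : ℕ) : Prop :=
  (Rbig n).coeff (3 ^ n) = 1 ∧ (Rbig n).natDegree = 3 ^ n ∧
    (∀ k, ((Rbig n).coeff k).natDegree ≤ 3 ^ n) ∧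
    ((Rbig n).coeff (3 ^ n - 1)).coeff (3 ^ n) = -1

lemma Rbig_one : Rbig 1 =
    C (-(X:Polynomial ℤ)^3) + C ((X:Polynomial ℤ)^3 - 3*X^2 + 3*X + 1) * X
      + C (-(X:Polynomial ℤ)^3 + 6*X^2 - 6*X - 1) * X^2 + X^3 := by
  show fpoly (C (X : Polynomial ℤ)) X = _
  exact fpoly_expand_base X

lemma inv_one : Inv 1 := by
  have h0 : (Rbig 1).coeff 0 = -(X:Polynomial ℤ)^3 := by
    rw [Rbig_one]; simp only [coeff_add, coeff_C_mul, coeff_X_pow, coeff_C, coeff_X]; norm_num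
  have h1 : (Rbig 1).coeff 1 = (X:Polynomial ℤ)^3 - 3*X^2 + 3*X + 1 := by
    rw [Rbig_one]; simp only [coeff_add, coeff_C_mul, coeff_X_pow, coeff_C, coeff_X]; norm_num
  have h2 : (Rbig 1).coeff 2 = -(X:Polynomial ℤ)^3 + 6*X^2 - 6*X - 1 := by
    rw [Rbig_one]; simp only [coeff_add, coeff_C_mul, coeff_X_pow, coeff_C, coeff_X]; norm_num
  have h3 : (Rbig 1).coeff 3 = 1 := by
    rw [Rbig_one]; simp only [coeff_add, coeff_C_mul, coeff_X_pow, coeff_C, coeff_X]; norm_num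
  have hdeg : (Rbig 1).natDegree = 3 := by
    refine le_antisymm ?_ (le_natDegree_of_ne_zero (by rw [h3]; exact one_ne_zero))
    rw [Rbig_one]; compute_degree
  refine ⟨by simpa using h3, by simpa using hdeg, ?_, ?_⟩
  · intro k
    show ((Rbig 1).coeff k).natDegree ≤ 3
    match k with
    | 0 => rw [h0]; compute_degree
    | 1 => rw [h1]; compute_degree
    | 2 => rw [h2]; compute_degree
    | 3 => rw [h3]; simp
    | (k+4) =>
      rw [coeff_eq_zero_of_natDegree_lt (by omega : (Rbig 1).natDegree < k + 4)]
      simp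
  · show ((Rbig 1).coeff (3 - 1)).coeff 3 = -1
    rw [show (3:ℕ) - 1 = 2 from rfl, h2]
    simp [coeff_X_pow, coeff_one, coeff_X]

lemma L_step (M : ℕ) (hM : 2 ≤ M) (l : ℕ → ℤ) (h0 : l (M + 1) = 0) (hlead : l M = -1) :
    (T (M + 1) l).det.natDegree ≤ 3 * (M + 1) - 1 ∧
      (T (M + 1) l).det.coeff (3 * (M + 1) - 1) = -1 := by
  rw [det_T_succ _ _ h0]
  have hD1 : (T M l).det.natDegree ≤ 3 * M := det_T_natDegree_le M l
  have hD2 : (T M l).det.coeff (3 * M) = -1 := by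
    rw [det_T_coeff M l hM, hlead]; norm_num
  have hq3 : (-(Q ℤ 3)).natDegree ≤ 2 := by
    show ((-((-X ^ 2 + X - 1 : Polynomial ℤ)))).natDegree ≤ 2
    compute_degree
  have hq3c : (-(Q ℤ 3)).coeff 2 = 1 := by
    show (-((-X ^ 2 + X - 1 : Polynomial ℤ))).coeff 2 = 1
    simp [coeff_one, coeff_X]
  constructor
  · refine natDegree_mul_le.trans ?_
    omega
  · rw [show 3 * (M + 1) - 1 = 2 + 3 * M from by omega,
      coeff_mul_add_eq_of_natDegree_le hq3 hD1, hq3c, hD2]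
    norm_num

lemma inv_step (n : ℕ) (h : Inv (n + 1)) : Inv (n + 2) := by
  obtain ⟨hc1, hdeg, hcle, hl3⟩ := h
  set m : ℕ := 3 ^ (n + 1) with hm
  have hm3 : 3 ≤ m := by
    have : (3:ℕ) ^ 1 ≤ 3 ^ (n + 1) := Nat.pow_le_pow_right (by norm_num) (by omega)
    simpa using this
  have hpow : (3 : ℕ) ^ (n + 2) = 3 * m := by rw [hm, pow_succ]; ring
  set R : Polynomial (Polynomial ℤ) := Rbig (n + 1) with hR
  set c : ℕ → Polynomial ℤ := fun k => R.coeff k with hcdef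
  set l : ℕ → ℤ := fun k => (c k).coeff m with hldef
  set p : Polynomial (Polynomial (Polynomial ℤ)) :=
    R.map (C : Polynomial ℤ →+* Polynomial (Polynomial ℤ)) with hp
  set q : Polynomial (Polynomial (Polynomial ℤ)) :=
    fpoly (X : Polynomial (Polynomial (Polynomial ℤ))) (C X) with hq
  have hmonic : R.Monic := by
    rw [Polynomial.Monic, Polynomial.leadingCoeff, hdeg]
    exact hc1
  have hpdeg : p.natDegree = m := by rw [hp, hmonic.natDegree_map, hdeg]
  have hpq : p.natDegree + q.natDegree = m + 3 := by rw [hpdeg, q_natDegree]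
  have hRbig2 : Rbig (n + 2) = _root_.resultant p q := rfl
  -- identification over ℤ[x][y]
  have hA : Rbig (n + 2) = (T m c).det := by
    rw [hRbig2]
    unfold _root_.resultant
    rw [← Matrix.det_submatrix_equiv_self (finCongr hpq.symm) (_root_.sylvester p q)]
    congr 1
    funext i j
    have hei : ((finCongr hpq.symm i : Fin (p.natDegree + q.natDegree)) : ℕ) = (i : ℕ) := by simp
    have hej : ((finCongr hpq.symm j : Fin (p.natDegree + q.natDegree)) : ℕ) = (j : ℕ) := by simp
    show _root_.sylvester p q (finCongr hpq.symm i) (finCongr hpq.symm j) = Tf m c (i : ℕ) (j : ℕ)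
    unfold _root_.sylvester
    rw [Matrix.of_apply, hei, hej, q_natDegree, hpdeg]
    unfold Tf
    by_cases h1 : (i : ℕ) < 3
    · rw [if_pos h1, if_pos h1]
      split_ifs with h2
      · rw [hp, coeff_map]
      · rfl
    · rw [if_neg h1, if_neg h1]
      split_ifs with h2
      · exact q_coeff _ (by omega)
      · rfl
  have hdet1 : (Rbig (n + 2)).natDegree = 3 * m ∧ (Rbig (n + 2)).coeff (3 * m) = 1 := by
    have hle := det_T_natDegree_le m c
    have hco := det_T_coeff m c (by omega)
    rw [← hA] at hle hco
    have hcm : c m = 1 := hc1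
    rw [hcm] at hco
    norm_num at hco
    exact ⟨le_antisymm hle (le_natDegree_of_ne_zero (by rw [hco]; exact one_ne_zero)), hco⟩
  -- the psi side
  have hpsidet : psi (Rbig (n + 2)) = ((T m c).map psi).det := by
    rw [hA, RingHom.map_det]; rfl
  have hWbound : ∀ i j : Fin (m + 3),
      (((T m c).map psi) i j).natDegree ≤
        (fun i : Fin (m + 3) => if (i : ℕ) < 3 then m else 0) i := by
    intro i j
    show (psi (Tf m c (i : ℕ) (j : ℕ))).natDegree ≤ (if (i : ℕ) < 3 then m else 0)
    unfold Tf
    by_cases h1 : (i : ℕ) < 3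
    · rw [if_pos h1, if_pos h1]
      split_ifs with h2
      · rw [psi_C]
        exact natDegree_map_le.trans (hcle _)
      · simp
    · rw [if_neg h1, if_neg h1]
      split_ifs with h2
      · rw [psi_Q]; simp
      · simp
  have hWdeg : (((T m c).map psi).det).natDegree ≤ 3 * m := by
    have h := det_natDegree_le _ _ hWbound
    rw [sum_weights m m 0, Nat.mul_zero] at h
    exact h
  have hWco : (((T m c).map psi).det).coeff (3 * m) = (T m l).det := by
    have h := det_coeff _ _ hWbound
    rw [sum_weights m m 0, Nat.mul_zero] at h
    have h' : (((T m c).map psi).det).coeff (3 * m) =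
        (Matrix.of fun i j : Fin (m + 3) => (((T m c).map psi) i j).coeff
          ((fun i : Fin (m + 3) => if (i : ℕ) < 3 then m else 0) i)).det := h
    rw [h']
    congr 1
    funext i j
    show (psi (Tf m c (i : ℕ) (j : ℕ))).coeff (if (i : ℕ) < 3 then m else 0)
      = Tf m l (i : ℕ) (j : ℕ)
    unfold Tf
    by_cases h1 : (i : ℕ) < 3
    · rw [if_pos h1, if_pos h1, if_pos h1]
      split_ifs with h2
      · rw [psi_C, coeff_map]
      · simp
    · rw [if_neg h1, if_neg h1, if_neg h1]
      split_ifs with h2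
      · rw [psi_Q, coeff_C_zero]
      · simp
  have hlm : l m = 0 := by
    show (c m).coeff m = 0
    rw [show c m = 1 from hc1, coeff_one, if_neg (by omega)]
  have hlm1 : l (m - 1) = -1 := hl3
  obtain ⟨M, hM⟩ : ∃ M, m = M + 1 := ⟨m - 1, by omega⟩
  have hLs := L_step M (by omega) l (by rw [← hM]; exact hlm)
    (by rw [show M = m - 1 from by omega]; exact hlm1)
  rw [← hM] at hLs
  refine ⟨?_, ?_, ?_, ?_⟩
  · rw [hpow]; exact hdet1.2
  · rw [hpow]; exact hdet1.1
  · intro k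
    rw [hpow]
    refine natDegree_le_iff_coeff_eq_zero.mpr fun N hN => ?_
    have hs := psi_coeff_coeff (Rbig (n + 2)) N k
    rw [← hs, hpsidet, coeff_eq_zero_of_natDegree_lt (lt_of_le_of_lt hWdeg hN)]
    simp
  · rw [hpow]
    have hs := psi_coeff_coeff (Rbig (n + 2)) (3 * m) (3 * m - 1)
    rw [← hs, hpsidet, hWco]
    exact hLs.2

lemma inv_all (n : ℕ) (hn : 1 ≤ n) : Inv n := by
  induction n with
  | zero => omega
  | succ k ih =>
    match k, ih with
    | 0, _ => exact inv_one
    | (k' + 1), ih => exact inv_step k' (ih (by omega))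

end Aux6

open Aux6 in
theorem statement6' (n : ℕ) (hn : 1 ≤ n) :
    (Rn n).degree = (2 * 3 ^ n - 1 : ℕ) := by
  obtain ⟨hc1, hdeg, hcle, hl3⟩ := inv_all n hn
  set m : ℕ := 3 ^ n with hm
  have hm3 : 3 ≤ m := by
    have : (3:ℕ) ^ 1 ≤ 3 ^ n := Nat.pow_le_pow_right (by norm_num) (by omega)
    simpa using this
  have heval : Rn n = ∑ i ∈ Finset.range (m + 1), (Rbig n).coeff i * X ^ i := by
    rw [Rn, eval_eq_sum_range, hdeg]
  have hco : (Rn n).coeff (2 * m - 1) = -1 := by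
    rw [heval, finset_sum_coeff]
    rw [Finset.sum_eq_single (m - 1)]
    · rw [coeff_mul_X_pow', if_pos (by omega), show 2 * m - 1 - (m - 1) = m from by omega]
      exact hl3
    · intro i hi hne
      rw [Finset.mem_range] at hi
      rw [coeff_mul_X_pow']
      by_cases him : i = m
      · subst him
        rw [if_pos (by omega), hc1, coeff_one, if_neg (by omega)]
      · rw [if_pos (by omega),
          coeff_eq_zero_of_natDegree_lt (lt_of_le_of_lt (hcle i) (by omega))]
    · intro hmem
      exact absurd (Finset.mem_range.mpr (by omega)) hmem
  have hdle : (Rn n).natDegree ≤ 2 * m - 1 := by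
    rw [heval]
    refine natDegree_sum_le_of_forall_le _ _ fun i hi => ?_
    rw [Finset.mem_range] at hi
    by_cases him : i = m
    · subst him
      rw [hc1, one_mul, natDegree_X_pow]
      omega
    · refine natDegree_mul_le.trans ?_
      rw [natDegree_X_pow]
      have := hcle i
      omega
  have hne : Rn n ≠ 0 := fun h => by rw [h, coeff_zero] at hco; norm_num at hco
  have hnat : (Rn n).natDegree = 2 * m - 1 :=
    le_antisymm hdle (le_natDegree_of_ne_zero (by rw [hco]; norm_num))
  rw [degree_eq_natDegree hne, hnat]

/-- For every `n ≥ 1`, `Rₙ(x) ∈ ℤ[x]` has degree exactly `2·3ⁿ − 1`. -/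
theorem statement6 (n : ℕ) (hn : 1 ≤ n) :
    (Rn n).degree = (2 * 3 ^ n - 1 : ℕ) := by
  exact statement6' n hn
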